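/- Scalar HMC characterization. Let H, F, N, r₀ be real numbers with H ≠ 0, F ≠ 0, F² ≤ 1 and r₀ > 0. Then there exists a real number P with P > 0, N = HFP, (1−F²)P ≥ 0, r₀ − H²P ≥ 0 and Ξ(P) ≥ 0 if and only if either (F > 0 and 0 < HN ≤ r₀F) or (F < 0 and r₀F ≤ HN < 0). -/

import Mathlib

/-- The concave quadratic `Ξ(P) = -H²P² + (r₀(1-F²) + 2HFN)P - N²`. -/
def Xi (H F N r0 P : ℝ) : ℝ :=
  -H ^ 2 * P ^ 2 + (r0 * (1 - F ^ 2) + 2 * H * F * N) * P - N ^ 2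

lemma XiFact (H F N r0 P : ℝ) (hN : N = H * F * P) :
    Xi H F N r0 P = (1 - F ^ 2) * P * (r0 - H ^ 2 * P) := by
  subst hN; unfold Xi; ring

lemma aux (H F N r0 : ℝ) (hH : H ≠ 0) (hF0 : F ≠ 0) (hF : F ^ 2 ≤ 1)
    (hP : 0 < H * N / (H ^ 2 * F)) (hle : H ^ 2 * (H * N / (H ^ 2 * F)) ≤ r0) :
    (∃ P : ℝ, 0 < P ∧ N = H * F * P ∧ 0 ≤ (1 - F ^ 2) * P ∧
        0 ≤ r0 - H ^ 2 * P ∧ 0 ≤ Xi H F N r0 P) := by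
  set P := H * N / (H ^ 2 * F) with hPdef
  have hN : N = H * F * P := by
    rw [hPdef]; field_simp
  have h1 : 0 ≤ (1 - F ^ 2) * P := mul_nonneg (by linarith) hP.le
  have h2 : 0 ≤ r0 - H ^ 2 * P := by linarith
  exact ⟨P, hP, hN, h1, h2, by rw [XiFact H F N r0 P hN]; exact mul_nonneg h1 h2⟩

/-- **scalar HMC characterization.** Under `H ≠ 0`, `F ≠ 0`,
`F² ≤ 1` and `r₀ > 0`, there is a scalar HMC solution `P > 0` iff either
`F > 0` and `0 < HN ≤ r₀F`, or `F < 0` and `r₀F ≤ HN < 0`. -/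
theorem stmt_17 (H F N r0 : ℝ) (hH : H ≠ 0) (hF0 : F ≠ 0) (hF : F ^ 2 ≤ 1)
    (hr0 : 0 < r0) :
    (∃ P : ℝ, 0 < P ∧ N = H * F * P ∧ 0 ≤ (1 - F ^ 2) * P ∧
        0 ≤ r0 - H ^ 2 * P ∧ 0 ≤ Xi H F N r0 P) ↔
      ((0 < F ∧ 0 < H * N ∧ H * N ≤ r0 * F) ∨
        (F < 0 ∧ r0 * F ≤ H * N ∧ H * N < 0)) := by
  have hH2 : 0 < H ^ 2 := by positivity
  constructor
  · rintro ⟨P, hP, hN, -, hr, -⟩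
    have hHN : H * N = H ^ 2 * F * P := by rw [hN]; ring
    have hH2P : 0 < H ^ 2 * P := mul_pos hH2 hP
    rcases hF0.lt_or_gt with hFneg | hFpos
    · right
      refine ⟨hFneg, ?_, ?_⟩
      · nlinarith
      · nlinarith
    · left
      refine ⟨hFpos, ?_, ?_⟩
      · nlinarith
      · nlinarith
  · rintro (⟨hFpos, hHN, hle⟩ | ⟨hFneg, hle, hHN⟩)
    · have hd : 0 < H ^ 2 * F := mul_pos hH2 hFpos
      have hP : 0 < H * N / (H ^ 2 * F) := div_pos hHN hd
      refine aux H F N r0 hH hF0 hF hP ?_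
      rw [mul_div_assoc']
      rw [div_le_iff₀ hd]
      nlinarith
    · have hd : H ^ 2 * F < 0 := mul_neg_of_pos_of_neg hH2 hFneg
      have hP : 0 < H * N / (H ^ 2 * F) := div_pos_of_neg_of_neg hHN hd
      refine aux H F N r0 hH hF0 hF hP ?_
      rw [mul_div_assoc']
      rw [div_le_iff_of_neg hd]
      nlinarith
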